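/- arXiv:1202.3981 — 2 statements merged into one kernel-verified Lean document; each statement's English description precedes it below -/
import Mathlib

section
/- For every nonnegative integer n, ∑_{k=0}^{n} k·H_k·H_{n-k} = (n(n+1)/2)·[(H_{n+1} − 1)² − H_{n+1}^{(2)} + 1]. -/
open Finset

/-- The harmonic number `H n = ∑_{k=1}^n 1/k`. -/
def H (n : ℕ) : ℚ := ∑ k ∈ Finset.range n, (1 : ℚ) / ((k : ℚ) + 1)

/-- The generalized harmonic number `H n ^ (m) = ∑_{k=1}^n 1/k^m`. -/
def Hgen (m n : ℕ) : ℚ := ∑ k ∈ Finset.range n, (1 : ℚ) / ((k : ℚ) + 1) ^ m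

lemma H_succ (n : ℕ) : H (n+1) = H n + 1/((n:ℚ)+1) := by
  simp [H, Finset.sum_range_succ]

lemma Hgen_succ (n : ℕ) : Hgen 2 (n+1) = Hgen 2 n + 1/((n:ℚ)+1)^2 := by
  simp [Hgen, Finset.sum_range_succ]

lemma refl_sum (n : ℕ) (f : ℕ → ℚ) :
    ∑ j ∈ Finset.range (n+1), f (n - j) = ∑ j ∈ Finset.range (n+1), f j := by
  have := Finset.sum_range_reflect f (n+1)
  rw [← this]
  rfl

lemma C_eq (n : ℕ) :
    ∑ j ∈ Finset.range (n+1), (1:ℚ)/(((j:ℚ)+1)*(((n-j : ℕ):ℚ)+1)) =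
      2 * H (n+1) / ((n:ℚ)+2) := by
  have key : ∀ j ∈ Finset.range (n+1),
      (1:ℚ)/(((j:ℚ)+1)*(((n-j : ℕ):ℚ)+1)) =
        (1/((n:ℚ)+2)) * (1/((j:ℚ)+1) + 1/(((n-j:ℕ):ℚ)+1)) := by
    intro j hj
    rw [Finset.mem_range] at hj
    have hjn : j ≤ n := by omega
    have h1 : ((n - j : ℕ) : ℚ) = (n:ℚ) - j := by push_cast [hjn]; ring
    have h2 : ((j:ℚ)+1) ≠ 0 := by positivity
    have h3 : (((n-j:ℕ):ℚ)+1) ≠ 0 := by positivity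
    have h4 : ((n:ℚ)+2) ≠ 0 := by positivity
    have hj' : (j:ℚ) ≤ n := by exact_mod_cast hjn
    have h3' : ((n:ℚ) - j + 1) ≠ 0 := by nlinarith
    rw [h1]
    field_simp
    ring
  rw [Finset.sum_congr rfl key, ← Finset.mul_sum, Finset.sum_add_distrib]
  have r1 : ∑ j ∈ Finset.range (n+1), (1:ℚ)/(((n-j:ℕ):ℚ)+1) = H (n+1) :=
    refl_sum n (fun j => (1:ℚ)/((j:ℚ)+1))
  have r2 : ∑ j ∈ Finset.range (n+1), (1:ℚ)/((j:ℚ)+1) = H (n+1) := rfl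
  rw [r1, r2]; ring

def B (n : ℕ) : ℚ := ∑ j ∈ Finset.range (n+1), H (n-j) * (1/((j:ℚ)+1))

lemma B_eq (n : ℕ) : B n = H (n+1)^2 - Hgen 2 (n+1) := by
  induction n with
  | zero => simp [B, H, Hgen]
  | succ n ih =>
    have step : B (n+1) = B n + ∑ j ∈ Finset.range (n+1),
        (1:ℚ)/(((j:ℚ)+1)*(((n-j : ℕ):ℚ)+1)) := by
      rw [B, Finset.sum_range_succ]
      have h0 : H (n+1-(n+1)) = 0 := by simp [H]
      rw [h0, zero_mul, add_zero]
      rw [B, ← Finset.sum_add_distrib]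
      apply Finset.sum_congr rfl
      intro j hj
      rw [Finset.mem_range] at hj
      have hjn : j ≤ n := by omega
      have : n + 1 - j = (n - j) + 1 := by omega
      rw [this, H_succ]
      have hc : ((n - j : ℕ) : ℚ) = (n:ℚ) - j := by push_cast [hjn]; ring
      have hj' : (j:ℚ) ≤ n := by exact_mod_cast hjn
      have h2 : ((j:ℚ)+1) ≠ 0 := by positivity
      have h3 : ((n:ℚ) - j + 1) ≠ 0 := by nlinarith
      rw [hc]
      field_simp
    rw [step, C_eq, ih, H_succ (n+1), Hgen_succ (n+1)]
    have h4 : ((n:ℚ)+1+1) ≠ 0 := by positivity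
    have h5 : ((n:ℚ)+2) ≠ 0 := by positivity
    field_simp
    push_cast
    ring

def A (n : ℕ) : ℚ := ∑ k ∈ Finset.range (n+1), H k * H (n-k)

lemma A_eq (n : ℕ) : A n = ((n:ℚ)+1) * ((H (n+1) - 1)^2 - Hgen 2 (n+1) + 1) := by
  induction n with
  | zero => simp [A, H, Hgen]
  | succ n ih =>
    have step : A (n+1) = A n + B n := by
      rw [A, Finset.sum_range_succ]
      have h0 : H (n+1-(n+1)) = 0 := by simp [H]
      rw [h0, mul_zero, add_zero, A]
      have : (∑ k ∈ Finset.range (n+1), H k * (1/(((n-k:ℕ):ℚ)+1))) = B n := by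
        rw [B, ← refl_sum n (fun k => H k * (1/(((n-k:ℕ):ℚ)+1)))]
        apply Finset.sum_congr rfl
        intro j hj
        rw [Finset.mem_range] at hj
        have : n - (n - j) = j := by omega
        rw [this]
      rw [← this, ← Finset.sum_add_distrib]
      apply Finset.sum_congr rfl
      intro k hk
      rw [Finset.mem_range] at hk
      have : n + 1 - k = (n - k) + 1 := by omega
      rw [this, H_succ]
      ring
    rw [step, B_eq, ih, H_succ (n+1), Hgen_succ (n+1)]
    have h4 : ((n:ℚ)+1+1) ≠ 0 := by positivity
    push_cast
    field_simp
    ring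

theorem stmt4 (n : ℕ) :
    ∑ k ∈ Finset.range (n + 1), (k : ℚ) * H k * H (n - k) =
      ((n : ℚ) * ((n : ℚ) + 1) / 2) * ((H (n + 1) - 1) ^ 2 - Hgen 2 (n + 1) + 1) := by
  have hrefl : ∑ k ∈ Finset.range (n + 1), (k : ℚ) * H k * H (n - k) =
      ∑ k ∈ Finset.range (n + 1), ((n-k:ℕ) : ℚ) * H (n-k) * H k := by
    rw [← refl_sum n (fun k => ((k:ℕ):ℚ) * H k * H (n - k))]
    apply Finset.sum_congr rfl
    intro j hj
    rw [Finset.mem_range] at hj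
    have : n - (n - j) = j := by omega
    rw [this]
  have twice : 2 * (∑ k ∈ Finset.range (n + 1), (k : ℚ) * H k * H (n - k)) =
      (n:ℚ) * A n := by
    rw [two_mul]
    nth_rewrite 2 [hrefl]
    rw [← Finset.sum_add_distrib, A, Finset.mul_sum]
    apply Finset.sum_congr rfl
    intro k hk
    rw [Finset.mem_range] at hk
    have hkn : k ≤ n := by omega
    have hc : ((n-k:ℕ):ℚ) = (n:ℚ) - k := by push_cast [hkn]; ring
    rw [hc]; ring
  have := A_eq n
  linarith [twice, this.symm ▸ twice]
end

section
/- For every nonnegative integer n, ∑_{k=0}^{n} k⁴·H_k·H_{n-k} = (n(n+1)(2n+1)(3n²+3n−1)/30)·[H_{n+1}² − H_{n+1}^{(2)}] − (1/900)·n(n+1)(447n³+468n²+17n−32)·H_{n+1} + (1/54000)·n(n+1)(20739n³+33066n²+4129n−3934). -/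
open Finset

lemma Hsucc (n : ℕ) : H (n + 1) = H n + 1 / ((n : ℚ) + 1) := by
  simp [H, Finset.sum_range_succ]

lemma Hgen2succ (n : ℕ) : Hgen 2 (n + 1) = Hgen 2 n + 1 / ((n : ℚ) + 1) ^ 2 := by
  simp [Hgen, Finset.sum_range_succ]

lemma L0 (n : ℕ) : ∑ k ∈ Finset.range (n + 1), H k = ((n : ℚ) + 1) * H (n + 1) - ((n : ℚ) + 1) := by
  induction n with
  | zero => simp [H]
  | succ n ih =>
    rw [Finset.sum_range_succ, ih, Hsucc (n + 1)]
    push_cast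
    have h : ((n : ℚ) + 1 + 1) ≠ 0 := by positivity
    field_simp
    ring

lemma L1 (n : ℕ) : ∑ k ∈ Finset.range (n + 1), (k : ℚ) * H k =
    (((n : ℚ) ^ 2 + n) / 2) * H (n + 1) - ((n : ℚ) ^ 2 + n) / 4 := by
  induction n with
  | zero => simp [H]
  | succ n ih =>
    rw [Finset.sum_range_succ, ih, Hsucc (n + 1)]
    push_cast
    have h : ((n : ℚ) + 1 + 1) ≠ 0 := by positivity
    field_simp
    ring

lemma L2 (n : ℕ) : ∑ k ∈ Finset.range (n + 1), (k : ℚ) ^ 2 * H k =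
    ((2 * (n : ℚ) ^ 3 + 3 * (n : ℚ) ^ 2 + n) / 6) * H (n + 1)
      - (4 * (n : ℚ) ^ 3 + 9 * (n : ℚ) ^ 2 + 5 * n) / 36 := by
  induction n with
  | zero => simp [H]
  | succ n ih =>
    rw [Finset.sum_range_succ, ih, Hsucc (n + 1)]
    push_cast
    have h : ((n : ℚ) + 1 + 1) ≠ 0 := by positivity
    field_simp
    ring

lemma L3 (n : ℕ) : ∑ k ∈ Finset.range (n + 1), (k : ℚ) ^ 3 * H k =
    (((n : ℚ) ^ 4 + 2 * (n : ℚ) ^ 3 + (n : ℚ) ^ 2) / 4) * H (n + 1)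
      - (3 * (n : ℚ) ^ 4 + 10 * (n : ℚ) ^ 3 + 9 * (n : ℚ) ^ 2 + 2 * n) / 48 := by
  induction n with
  | zero => simp [H]
  | succ n ih =>
    rw [Finset.sum_range_succ, ih, Hsucc (n + 1)]
    push_cast
    have h : ((n : ℚ) + 1 + 1) ≠ 0 := by positivity
    field_simp
    ring

lemma Hrefl (n : ℕ) : ∑ k ∈ Finset.range (n + 1), (1 : ℚ) / ((n : ℚ) + 1 - k) = H (n + 1) := by
  have h := Finset.sum_range_reflect (fun k => (1 : ℚ) / ((n : ℚ) + 1 - k)) (n + 1)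
  rw [← h, H]
  apply Finset.sum_congr rfl
  intro j hj
  have hjn : j ≤ n := by simpa [Nat.lt_succ_iff] using hj
  have : ((n + 1 - 1 - j : ℕ) : ℚ) = (n : ℚ) - j := by
    have : n + 1 - 1 - j = n - j := by omega
    rw [this, Nat.cast_sub hjn]
  rw [this]
  ring_nf

lemma LP (n : ℕ) :
    ∑ k ∈ Finset.range (n + 1), (1 : ℚ) / (((k : ℚ) + 1) * ((n : ℚ) + 1 - k)) =
      2 * H (n + 1) / ((n : ℚ) + 2) := by
  have key : ∀ k ∈ Finset.range (n + 1),
      (1 : ℚ) / (((k : ℚ) + 1) * ((n : ℚ) + 1 - k)) =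
        (1 / ((n : ℚ) + 2)) * (1 / ((k : ℚ) + 1) + 1 / ((n : ℚ) + 1 - k)) := by
    intro k hk
    have hkn : k ≤ n := by simpa [Nat.lt_succ_iff] using hk
    have h1 : ((k : ℚ) + 1) ≠ 0 := by positivity
    have h2 : ((n : ℚ) + 1 - k) ≠ 0 := by
      have : (k : ℚ) ≤ n := by exact_mod_cast hkn
      intro h; nlinarith
    have h3 : ((n : ℚ) + 2) ≠ 0 := by positivity
    field_simp
    ring
  rw [Finset.sum_congr rfl key, ← Finset.mul_sum, Finset.sum_add_distrib, Hrefl]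
  have : ∑ k ∈ Finset.range (n + 1), (1 : ℚ) / ((k : ℚ) + 1) = H (n + 1) := rfl
  rw [this]
  ring

lemma LV (n : ℕ) :
    ∑ k ∈ Finset.range (n + 1), H (n - k) / ((k : ℚ) + 1) =
      (H (n + 1)) ^ 2 - Hgen 2 (n + 1) := by
  induction n with
  | zero =>
    simp [H, Hgen, Finset.sum_range_succ]
  | succ n ih =>
    rw [Finset.sum_range_succ]
    have h0 : H (n + 1 - (n + 1)) = 0 := by simp [H]
    rw [h0]
    have key : ∀ k ∈ Finset.range (n + 1),
        H (n + 1 - k) / ((k : ℚ) + 1) =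
          H (n - k) / ((k : ℚ) + 1) + 1 / (((k : ℚ) + 1) * ((n : ℚ) + 1 - k)) := by
      intro k hk
      have hkn : k ≤ n := by simpa [Nat.lt_succ_iff] using hk
      have h1 : n + 1 - k = (n - k) + 1 := by omega
      rw [h1, Hsucc, Nat.cast_sub hkn]
      have h2 : ((k : ℚ) + 1) ≠ 0 := by positivity
      have h3 : ((n : ℚ) - k + 1) ≠ 0 := by
        have : (k : ℚ) ≤ n := by exact_mod_cast hkn
        intro h; nlinarith
      have h4 : ((n : ℚ) + 1 - k) ≠ 0 := by
        intro h; apply h3; linarith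
      field_simp
      ring
    rw [Finset.sum_congr rfl key, Finset.sum_add_distrib, ih, LP]
    rw [Hsucc (n + 1), Hgen2succ (n + 1)]
    push_cast
    have h : ((n : ℚ) + 1 + 1) ≠ 0 := by positivity
    field_simp
    ring

lemma LVr (n : ℕ) :
    ∑ k ∈ Finset.range (n + 1), H k / ((n : ℚ) + 1 - k) =
      (H (n + 1)) ^ 2 - Hgen 2 (n + 1) := by
  have h := Finset.sum_range_reflect (fun k => H k / ((n : ℚ) + 1 - k)) (n + 1)
  rw [← h, ← LV n]
  apply Finset.sum_congr rfl
  intro j hj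
  have hjn : j ≤ n := by simpa [Nat.lt_succ_iff] using hj
  have h1 : n + 1 - 1 - j = n - j := by omega
  rw [h1, Nat.cast_sub hjn]
  ring_nf

theorem stmt7 (n : ℕ) :
    ∑ k ∈ Finset.range (n + 1), (k : ℚ) ^ 4 * H k * H (n - k) =
      ((n : ℚ) * ((n : ℚ) + 1) * (2 * (n : ℚ) + 1) * (3 * (n : ℚ) ^ 2 + 3 * (n : ℚ) - 1) / 30) *
          ((H (n + 1)) ^ 2 - Hgen 2 (n + 1))
        - (1 / 900) * (n : ℚ) * ((n : ℚ) + 1) * (447 * (n : ℚ) ^ 3 + 468 * (n : ℚ) ^ 2 + 17 * (n : ℚ) - 32) * H (n + 1)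
        + (1 / 54000) * (n : ℚ) * ((n : ℚ) + 1) *
            (20739 * (n : ℚ) ^ 3 + 33066 * (n : ℚ) ^ 2 + 4129 * (n : ℚ) - 3934) := by
  induction n with
  | zero => simp [H, Hgen]
  | succ n ih =>
    rw [Finset.sum_range_succ]
    have h0 : H (n + 1 - (n + 1)) = 0 := by simp [H]
    rw [h0]
    have key : ∀ k ∈ Finset.range (n + 1),
        (k : ℚ) ^ 4 * H k * H (n + 1 - k) =
          (k : ℚ) ^ 4 * H k * H (n - k)
            + ((n : ℚ) + 1) ^ 4 * (H k / ((n : ℚ) + 1 - k))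
            - (k : ℚ) ^ 3 * H k
            - ((n : ℚ) + 1) * ((k : ℚ) ^ 2 * H k)
            - ((n : ℚ) + 1) ^ 2 * ((k : ℚ) * H k)
            - ((n : ℚ) + 1) ^ 3 * H k := by
      intro k hk
      have hkn : k ≤ n := by simpa [Nat.lt_succ_iff] using hk
      have h1 : n + 1 - k = (n - k) + 1 := by omega
      rw [h1, Hsucc, Nat.cast_sub hkn]
      have h3 : ((n : ℚ) - k + 1) ≠ 0 := by
        have : (k : ℚ) ≤ n := by exact_mod_cast hkn
        intro h; nlinarith
      have h4 : ((n : ℚ) + 1 - k) ≠ 0 := by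
        intro h; apply h3; linarith
      field_simp
      ring
    rw [Finset.sum_congr rfl key]
    rw [Finset.sum_sub_distrib, Finset.sum_sub_distrib, Finset.sum_sub_distrib,
      Finset.sum_sub_distrib, Finset.sum_add_distrib, ← Finset.mul_sum, ← Finset.mul_sum,
      ← Finset.mul_sum, ← Finset.mul_sum]
    rw [ih, LVr, L0, L1, L2, L3]
    rw [Hsucc (n + 1), Hgen2succ (n + 1)]
    push_cast
    have h : ((n : ℚ) + 1 + 1) ≠ 0 := by positivity
    field_simp
    ring
end
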